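/- For the sequence (z_t) defined in the context, for all indices with 1 ≤ j < t ≤ T+1, the j-th coordinate of z_t satisfies z_{t,j} ≥ L(1−β)c/(4·T^α). -/
import Mathlib


lemma aux_sqrt_sum (k : ℕ) : ∀ T : ℕ, k ≤ T →
    ∑ s ∈ Finset.Icc (k+1) T, 1 / Real.sqrt s ≤ 2 * (Real.sqrt T - Real.sqrt k) := by
  intro T
  induction T with
  | zero => intro hk; interval_cases k; simp
  | succ n ih =>
    intro hk
    rcases Nat.lt_or_ge n k with hnk | hnk
    · have hkn : k = n + 1 := by omega
      subst hkn; simp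
    · have hsplit : ∑ s ∈ Finset.Icc (k+1) (n+1), 1 / Real.sqrt s
          = ∑ s ∈ Finset.Icc (k+1) n, 1 / Real.sqrt s + 1 / Real.sqrt (n+1) := by
        rw [Finset.sum_Icc_succ_top (by omega)]; push_cast; ring
      rw [hsplit]
      have h1 := ih hnk
      have hs1 : Real.sqrt n ^ 2 = (n:ℝ) := Real.sq_sqrt (by positivity)
      have hpos : (0:ℝ) < Real.sqrt ((n:ℝ)+1) := Real.sqrt_pos.2 (by positivity)
      have hs2 : Real.sqrt ((n:ℝ)+1) ^ 2 = ((n:ℝ)+1) := Real.sq_sqrt (by positivity)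
      have hnn : 0 ≤ Real.sqrt n := Real.sqrt_nonneg _
      have key : 1 / Real.sqrt ((n:ℝ)+1) ≤ 2 * (Real.sqrt ((n:ℝ)+1) - Real.sqrt n) := by
        rw [div_le_iff₀ hpos]
        nlinarith [hpos, hnn]
      push_cast
      linarith

lemma aux_key (T k : ℕ) (α : ℝ) (hk : 1 ≤ k) (hkT : k ≤ T) (hα0 : 0 ≤ α) (hα2 : α ≤ 1/2) :
    ∑ s ∈ Finset.Icc (k+1) T, (s:ℝ) ^ (-α) ≤ 2 * ((T:ℝ) - k + 1) * (T:ℝ) ^ (-α) := by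
  have hT0 : (0:ℝ) < T := by
    have : 0 < T := by omega
    exact_mod_cast this
  have hTa : (0:ℝ) < (T:ℝ) ^ (-α) := Real.rpow_pos_of_pos hT0 _
  have step : ∀ s ∈ Finset.Icc (k+1) T,
      (s:ℝ) ^ (-α) ≤ (T:ℝ)^(-α) * (Real.sqrt T * (1 / Real.sqrt s)) := by
    intro s hs
    simp only [Finset.mem_Icc] at hs
    have hs0 : (0:ℝ) < s := by
      have : 0 < s := by omega
      exact_mod_cast this
    have hsT : (s:ℝ) ≤ T := by exact_mod_cast hs.2
    have h1 : (1:ℝ) ≤ (T:ℝ)/s := (one_le_div hs0).2 hsT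
    have h2 : ((T:ℝ)/s) ^ α ≤ ((T:ℝ)/s) ^ (1/2 : ℝ) :=
      Real.rpow_le_rpow_of_exponent_le h1 hα2
    have h3 : ((T:ℝ)/s) ^ (1/2 : ℝ) = Real.sqrt T / Real.sqrt s := by
      rw [← Real.sqrt_eq_rpow, Real.sqrt_div hT0.le]
    have h4 : ((T:ℝ)/s) ^ α = (T:ℝ)^α / (s:ℝ)^α := Real.div_rpow hT0.le hs0.le α
    have h5 : (s:ℝ)^(-α) = ((s:ℝ)^α)⁻¹ := Real.rpow_neg hs0.le α
    have h6 : (T:ℝ)^(-α) = ((T:ℝ)^α)⁻¹ := Real.rpow_neg hT0.le α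
    have hsa : (0:ℝ) < (s:ℝ)^α := Real.rpow_pos_of_pos hs0 _
    have hTa' : (0:ℝ) < (T:ℝ)^α := Real.rpow_pos_of_pos hT0 _
    have hss : (0:ℝ) < Real.sqrt s := Real.sqrt_pos.2 hs0
    rw [h3, h4, div_le_div_iff₀ hsa hss] at h2
    rw [h5, h6,
      show ((T:ℝ)^α)⁻¹ * (Real.sqrt T * (1 / Real.sqrt s)) = Real.sqrt T / ((T:ℝ)^α * Real.sqrt s)
        by field_simp,
      inv_eq_one_div, div_le_div_iff₀ hsa (by positivity)]
    nlinarith [h2]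
  calc ∑ s ∈ Finset.Icc (k+1) T, (s:ℝ) ^ (-α)
      ≤ ∑ s ∈ Finset.Icc (k+1) T, (T:ℝ)^(-α) * (Real.sqrt T * (1 / Real.sqrt s)) :=
        Finset.sum_le_sum step
    _ = (T:ℝ)^(-α) * Real.sqrt T * ∑ s ∈ Finset.Icc (k+1) T, 1 / Real.sqrt s := by
        rw [Finset.mul_sum]; apply Finset.sum_congr rfl; intro s _; ring
    _ ≤ (T:ℝ)^(-α) * Real.sqrt T * (2 * (Real.sqrt T - Real.sqrt k)) := by
        apply mul_le_mul_of_nonneg_left (aux_sqrt_sum k T hkT)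
        positivity
    _ ≤ 2 * ((T:ℝ) - k + 1) * (T:ℝ) ^ (-α) := by
        have hsT : Real.sqrt T ^ 2 = (T:ℝ) := Real.sq_sqrt hT0.le
        have hk0 : (0:ℝ) ≤ k := by positivity
        have hkk : (k:ℝ) ≤ Real.sqrt T * Real.sqrt k := by
          have e1 : Real.sqrt k * Real.sqrt k = (k:ℝ) := Real.mul_self_sqrt hk0
          have e2 : Real.sqrt k ≤ Real.sqrt T := Real.sqrt_le_sqrt (by exact_mod_cast hkT)
          nlinarith [Real.sqrt_nonneg (k:ℝ)]
        nlinarith [Real.sqrt_nonneg (T:ℝ), hTa]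


lemma aux_geo (β : ℝ) (hβ0 : 0 ≤ β) (hβ1 : β < 1) (k : ℕ) :
    ∀ s : ℕ, (1-β) * ∑ i ∈ Finset.Icc (k+1) s, β^(s-i) ≤ 1 := by
  intro s
  induction s with
  | zero => simp [hβ1.le]
  | succ n ih =>
    rcases Nat.lt_or_ge n k with hnk | hnk
    · have : Finset.Icc (k+1) (n+1) = ∅ := by
        apply Finset.Icc_eq_empty; omega
      rw [this]; simp [hβ1.le]
    · rw [Finset.sum_Icc_succ_top (by omega)]
      have e : ∑ i ∈ Finset.Icc (k+1) n, β^(n+1-i) = β * ∑ i ∈ Finset.Icc (k+1) n, β^(n-i) := by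
        rw [Finset.mul_sum]
        apply Finset.sum_congr rfl
        intro i hi
        simp only [Finset.mem_Icc] at hi
        rw [show n+1-i = (n-i)+1 by omega, pow_succ]
        ring
      rw [e, Nat.sub_self, pow_zero]
      nlinarith [ih]

lemma aux_geo_nonneg (β : ℝ) (hβ0 : 0 ≤ β) (k s : ℕ) :
    0 ≤ ∑ i ∈ Finset.Icc (k+1) s, β^(s-i) :=
  Finset.sum_nonneg fun i _ => pow_nonneg hβ0 _




/- STATEMENT 5: for the SGDM trajectory z on the lower-bound function, for all
   1 ≤ j < t ≤ T+1 one has z_{t,j} ≥ L(1−β)c/(4·T^α).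
   The coordinate `j : Fin T` corresponds to the 1-based index `j+1`. -/
theorem stmt_5
    (T : ℕ) (hT : 1 ≤ T) (L β c α : ℝ)
    (hL : 0 < L) (hβ0 : 0 ≤ β) (hβ1 : β < 1) (hc : 0 < c) (hα0 : 0 ≤ α) (hα2 : α ≤ 1 / 2)
    (η : ℕ → ℝ) (hη : ∀ t : ℕ, η t = c * (t : ℝ) ^ (-α))
    (a b : ℕ → ℝ)
    (hb : ∀ j : ℕ, b j = L * (j : ℝ) ^ α / (2 * (T : ℝ) ^ α))
    (ha : ∀ j : ℕ, a j = L * (1 - β) / (8 * ((T : ℝ) - (j : ℝ) + 1)))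
    (h : ℕ → Fin T → ℝ)
    (hh : ∀ (i : ℕ) (j : Fin T), h i j =
      if (j : ℕ) + 1 < i then a ((j : ℕ) + 1)
      else if (j : ℕ) + 1 = i then -(b ((j : ℕ) + 1)) else 0)
    (z : ℕ → Fin T → ℝ) (hz1 : z 1 = 0)
    (hzrec : ∀ t : ℕ, 1 ≤ t →
      z (t + 1) = z t - ((1 - β) * η t) • ∑ i ∈ Finset.Icc 1 t, (β ^ (t - i)) • h i) :
    ∀ (t : ℕ) (j : Fin T), (j : ℕ) + 1 < t → t ≤ T + 1 →
      L * (1 - β) * c / (4 * (T : ℝ) ^ α) ≤ z t j := by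
  intro t j hjt htT
  have hjT : (j : ℕ) < T := j.isLt
  set k : ℕ := (j : ℕ) + 1 with hkdef
  have hk1 : 1 ≤ k := by omega
  have hkT : k ≤ T := by omega
  have hkt : k < t := hjt
  -- basic positivity facts
  have hTR : (0:ℝ) < (T:ℝ) := by exact_mod_cast (by omega : 0 < T)
  have hkR : (0:ℝ) < (k:ℝ) := by exact_mod_cast (by omega : 0 < k)
  have hkTR : (k:ℝ) ≤ (T:ℝ) := by exact_mod_cast hkT
  have hTα : (0:ℝ) < (T:ℝ) ^ α := Real.rpow_pos_of_pos hTR α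
  have h1β : (0:ℝ) < 1 - β := by linarith
  have hden : (0:ℝ) < (T:ℝ) - (k:ℝ) + 1 := by linarith
  have hak : 0 ≤ a k := by rw [ha]; positivity
  have hbk : 0 ≤ b k := by
    rw [hb]
    have : (0:ℝ) ≤ (k:ℝ) ^ α := Real.rpow_nonneg hkR.le α
    positivity
  have hηnn : ∀ s : ℕ, 0 ≤ η s := by
    intro s; rw [hη]
    have : (0:ℝ) ≤ (s:ℝ) ^ (-α) := Real.rpow_nonneg (by positivity) _
    positivity
  set Q : ℕ → ℝ := fun s => η s * ∑ i ∈ Finset.Icc 1 s, β^(s-i) * h i j with hQ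
  -- closed form
  have closed : ∀ u : ℕ, 1 ≤ u → z u j = -((1-β) * ∑ s ∈ Finset.Icc 1 (u-1), Q s) := by
    intro u hu
    induction u with
    | zero => omega
    | succ n ih =>
      rcases Nat.eq_or_lt_of_le hu with h1 | h1
      · have hn0 : n = 0 := by omega
        subst hn0
        simp [hz1]
      · have hn1 : 1 ≤ n := by omega
        have hrec := hzrec n hn1
        have hcomp : z (n+1) j = z n j
            - ((1-β) * η n) * ∑ i ∈ Finset.Icc 1 n, β^(n-i) * h i j := by
          have := congrFun hrec j
          simpa [Finset.sum_apply, smul_eq_mul] using this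
        rw [hcomp, ih hn1]
        have hsp : ∑ s ∈ Finset.Icc 1 n, Q s = ∑ s ∈ Finset.Icc 1 (n-1), Q s + Q n := by
          obtain ⟨m, rfl⟩ : ∃ m, n = m + 1 := ⟨n - 1, by omega⟩
          rw [Finset.sum_Icc_succ_top (by omega)]
          simp
        rw [show n + 1 - 1 = n from rfl, hsp]
        simp only [hQ]
        ring
  -- Q s = 0 for s < k
  have Qzero : ∀ s : ℕ, s < k → Q s = 0 := by
    intro s hs
    simp only [hQ]
    have : ∑ i ∈ Finset.Icc 1 s, β^(s-i) * h i j = 0 := by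
      apply Finset.sum_eq_zero
      intro i hi
      simp only [Finset.mem_Icc] at hi
      rw [hh, if_neg (by omega), if_neg (by omega)]
      ring
    rw [this]; ring
  -- Q k
  have Qk : Q k = -(η k * b k) := by
    simp only [hQ]
    have e : ∑ i ∈ Finset.Icc 1 k, β^(k-i) * h i j = -(b k) := by
      rw [show k = (j:ℕ) + 1 from hkdef, Finset.sum_Icc_succ_top (by omega)]
      have e0 : ∑ i ∈ Finset.Icc 1 (j:ℕ), β^((j:ℕ)+1-i) * h i j = 0 := by
        apply Finset.sum_eq_zero
        intro i hi
        simp only [Finset.mem_Icc] at hi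
        rw [hh, if_neg (by omega), if_neg (by omega)]
        ring
      rw [e0, hh, if_neg (by omega), if_pos rfl, Nat.sub_self, pow_zero]
      ring
    rw [e]; ring
  -- bound for s > k
  have Qbound : ∀ s : ℕ, k < s → (1-β) * Q s ≤ η s * a k := by
    intro s hsk
    have hd : Disjoint (Finset.Icc 1 k) (Finset.Icc (k+1) s) := by
      apply Finset.disjoint_left.2
      intro x hx hx'
      simp only [Finset.mem_Icc] at hx hx'
      omega
    have hu : Finset.Icc 1 k ∪ Finset.Icc (k+1) s = Finset.Icc 1 s := by
      ext x
      simp only [Finset.mem_union, Finset.mem_Icc]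
      omega
    have hsplit : ∑ i ∈ Finset.Icc 1 s, β^(s-i) * h i j
        = ∑ i ∈ Finset.Icc 1 k, β^(s-i) * h i j + ∑ i ∈ Finset.Icc (k+1) s, β^(s-i) * h i j := by
      rw [← hu, Finset.sum_union hd]
    have e1 : ∑ i ∈ Finset.Icc 1 k, β^(s-i) * h i j = β^(s-k) * (-(b k)) := by
      rw [show k = (j:ℕ) + 1 from hkdef, Finset.sum_Icc_succ_top (by omega)]
      have e0 : ∑ i ∈ Finset.Icc 1 (j:ℕ), β^(s-i) * h i j = 0 := by
        apply Finset.sum_eq_zero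
        intro i hi
        simp only [Finset.mem_Icc] at hi
        rw [hh, if_neg (by omega), if_neg (by omega)]
        ring
      rw [e0, hh, if_neg (by omega), if_pos rfl]
      ring
    have e2 : ∑ i ∈ Finset.Icc (k+1) s, β^(s-i) * h i j
        = (∑ i ∈ Finset.Icc (k+1) s, β^(s-i)) * a k := by
      rw [Finset.sum_mul]
      apply Finset.sum_congr rfl
      intro i hi
      simp only [Finset.mem_Icc] at hi
      rw [hh, if_pos (by omega)]
    have hgeo := aux_geo β hβ0 hβ1 k s
    have hgeonn := aux_geo_nonneg β hβ0 k s
    have hpow : (0:ℝ) ≤ β^(s-k) := pow_nonneg hβ0 _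
    have hηs := hηnn s
    simp only [hQ]
    rw [hsplit, e1, e2]
    have expand : (1-β) * (η s * (β^(s-k) * (-(b k)) + (∑ i ∈ Finset.Icc (k+1) s, β^(s-i)) * a k))
        = -((1-β) * β^(s-k) * (η s * b k))
          + ((1-β) * ∑ i ∈ Finset.Icc (k+1) s, β^(s-i)) * (η s * a k) := by ring
    rw [expand]
    have t1 : (0:ℝ) ≤ (1-β) * β^(s-k) * (η s * b k) := by positivity
    have t2 : ((1-β) * ∑ i ∈ Finset.Icc (k+1) s, β^(s-i)) * (η s * a k) ≤ η s * a k := by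
      have hmul : (0:ℝ) ≤ η s * a k := by positivity
      nlinarith [hgeo, hmul]
    linarith
  -- assemble
  rw [closed t (by omega)]
  have hd : Disjoint (Finset.Icc 1 k) (Finset.Icc (k+1) (t-1)) := by
    apply Finset.disjoint_left.2
    intro x hx hx'
    simp only [Finset.mem_Icc] at hx hx'
    omega
  have hu : Finset.Icc 1 k ∪ Finset.Icc (k+1) (t-1) = Finset.Icc 1 (t-1) := by
    ext x
    simp only [Finset.mem_union, Finset.mem_Icc]
    omega
  have hsplit : ∑ s ∈ Finset.Icc 1 (t-1), Q s
      = ∑ s ∈ Finset.Icc 1 k, Q s + ∑ s ∈ Finset.Icc (k+1) (t-1), Q s := by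
    rw [← hu, Finset.sum_union hd]
  have hfirst : ∑ s ∈ Finset.Icc 1 k, Q s = Q k := by
    rw [show k = (j:ℕ) + 1 from hkdef, Finset.sum_Icc_succ_top (by omega)]
    rw [Finset.sum_eq_zero (fun s hs => Qzero s (by simp only [Finset.mem_Icc] at hs; omega))]
    simp
  rw [hsplit, hfirst, Qk]
  -- bound the tail
  have tail : (1-β) * ∑ s ∈ Finset.Icc (k+1) (t-1), Q s ≤ L * (1-β) * c / (4 * (T:ℝ)^α) := by
    have step1 : (1-β) * ∑ s ∈ Finset.Icc (k+1) (t-1), Q s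
        ≤ ∑ s ∈ Finset.Icc (k+1) (t-1), η s * a k := by
      rw [Finset.mul_sum]
      apply Finset.sum_le_sum
      intro s hs
      simp only [Finset.mem_Icc] at hs
      exact Qbound s (by omega)
    have step2 : ∑ s ∈ Finset.Icc (k+1) (t-1), η s * a k
        = (c * a k) * ∑ s ∈ Finset.Icc (k+1) (t-1), (s:ℝ)^(-α) := by
      rw [Finset.mul_sum]
      apply Finset.sum_congr rfl
      intro s _
      rw [hη]; ring
    have step3 : ∑ s ∈ Finset.Icc (k+1) (t-1), (s:ℝ)^(-α)
        ≤ ∑ s ∈ Finset.Icc (k+1) T, (s:ℝ)^(-α) := by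
      apply Finset.sum_le_sum_of_subset_of_nonneg
      · apply Finset.Icc_subset_Icc_right; omega
      · intro s _ _
        exact Real.rpow_nonneg (by positivity) _
    have step4 := aux_key T k α hk1 hkT hα0 hα2
    have hcak : (0:ℝ) ≤ c * a k := by positivity
    have final : (c * a k) * (2 * ((T:ℝ) - k + 1) * (T:ℝ)^(-α)) = L * (1-β) * c / (4 * (T:ℝ)^α) := by
      rw [ha, Real.rpow_neg hTR.le]
      field_simp
      ring
    calc (1-β) * ∑ s ∈ Finset.Icc (k+1) (t-1), Q s
        ≤ (c * a k) * ∑ s ∈ Finset.Icc (k+1) (t-1), (s:ℝ)^(-α) := by rw [← step2]; exact step1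
      _ ≤ (c * a k) * (2 * ((T:ℝ) - k + 1) * (T:ℝ)^(-α)) := by
          apply mul_le_mul_of_nonneg_left (step3.trans step4) hcak
      _ = L * (1-β) * c / (4 * (T:ℝ)^α) := final
  -- head
  have head : (1-β) * (η k * b k) = L * (1-β) * c / (2 * (T:ℝ)^α) := by
    rw [hη, hb]
    have hkk : (k:ℝ)^(-α) * (k:ℝ)^α = 1 := by
      rw [← Real.rpow_add hkR]
      simp
    calc (1-β) * (c * (k:ℝ)^(-α) * (L * (k:ℝ)^α / (2 * (T:ℝ)^α)))
        = ((k:ℝ)^(-α) * (k:ℝ)^α) * (L * (1-β) * c / (2 * (T:ℝ)^α)) := by ring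
      _ = L * (1-β) * c / (2 * (T:ℝ)^α) := by rw [hkk]; ring
  have expand2 : -((1-β) * (-(η k * b k) + ∑ s ∈ Finset.Icc (k+1) (t-1), Q s))
      = (1-β) * (η k * b k) - (1-β) * ∑ s ∈ Finset.Icc (k+1) (t-1), Q s := by ring
  rw [expand2, head]
  have goalid : L * (1-β) * c / (2 * (T:ℝ)^α) - L * (1-β) * c / (4 * (T:ℝ)^α)
      = L * (1-β) * c / (4 * (T:ℝ)^α) := by
    field_simp
    ring
  linarith
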